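/- Every nonseparable metric space Y admits a decomposition Y = ⋃_{n,k∈ℕ} D_{n,k}, where each D_{n,k} is a union ⋃_ξ D_{n,k}^{(ξ)} of pairwise disjoint Borel sets such that: (i) the union of any subfamily of {D_{n,k}^{(ξ)}}_ξ is Borel, and (ii) every nonempty open subset G of Y can be written as a union of sets D_{n,k}^{(ξ)} contained in G. -/

import Mathlib

open EMetric ENNReal Set

noncomputable section

variable {Y : Type*} [MetricSpace Y]

private def eps (n : ℕ) : ℝ≥0∞ := ((n : ℝ≥0∞) + 1)⁻¹

private lemma eps_ne_zero (n : ℕ) : eps n ≠ 0 := by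
  simp [eps]
private lemma eps_ne_top (n : ℕ) : eps n ≠ ⊤ := by
  simp [eps]

/-- The basic open pieces. -/
private def Uset (n k : ℕ) (s : Y) : Set Y :=
  EMetric.ball s (eps n - eps k) ∩
    {x | eps n - eps k / 2 < EMetric.infEdist x {t | WellOrderingRel t s}}

private lemma Uset_isOpen (n k : ℕ) (s : Y) : IsOpen (Uset n k s) :=
  EMetric.isOpen_ball.inter <|
    isOpen_lt continuous_const (EMetric.continuous_infEdist)

private lemma Uset_disjoint (n k : ℕ) {s t : Y} (hst : s ≠ t) :
    Disjoint (Uset n k s) (Uset n k t) := by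
  have key : ∀ a b : Y, WellOrderingRel a b → Disjoint (Uset n k b) (Uset n k a) := by
    intro a b hab
    rw [Set.disjoint_left]
    rintro x ⟨hx1, hx2⟩ ⟨hy1, hy2⟩
    have h1 : eps n - eps k / 2 < edist x a :=
      lt_of_lt_of_le hx2 (EMetric.infEdist_le_edist_of_mem hab)
    have h2 : edist x a < eps n - eps k := hy1
    have h3 : eps n - eps k ≤ eps n - eps k / 2 :=
      tsub_le_tsub_left (ENNReal.half_le_self) _
    exact absurd (h2.trans_le h3) (not_lt.2 h1.le)
  rcases trichotomous_of (WellOrderingRel : Y → Y → Prop) s t with h | h | h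
  · exact (key s t h).symm
  · exact absurd h hst
  · exact key t s h

private lemma exists_eps_lt {a : ℝ≥0∞} (ha : a ≠ 0) : ∃ n, eps n < a := by
  obtain ⟨n, hn⟩ := ENNReal.exists_inv_nat_lt ha
  refine ⟨n, lt_of_le_of_lt ?_ hn⟩
  simp only [eps]
  exact ENNReal.inv_le_inv.2 (by exact_mod_cast le_self_add)

private lemma Uset_cover (x : Y) {δ : ℝ≥0∞} (hδ : δ ≠ 0) :
    ∃ n k s, x ∈ Uset n k s ∧ Uset n k s ⊆ EMetric.ball x δ := by
  obtain ⟨n, hn⟩ := exists_eps_lt (a := δ / 2) (by simp [ENNReal.div_eq_zero_iff, hδ])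
  have wf : WellFounded (WellOrderingRel : Y → Y → Prop) := IsWellFounded.wf
  have hne : {t : Y | edist x t < eps n}.Nonempty :=
    ⟨x, by simp [pos_iff_ne_zero, eps_ne_zero n]⟩
  set s := wf.min _ hne with hs_def
  have hs : edist x s < eps n := wf.min_mem _ hne
  have hmin : ∀ t, WellOrderingRel t s → eps n ≤ edist x t := by
    intro t ht
    by_contra h
    exact wf.not_lt_min {t : Y | edist x t < eps n} (x := t) (not_le.1 h) ht
  obtain ⟨k, hk⟩ := exists_eps_lt (a := eps n - edist x s)
    (by rw [Ne, tsub_eq_zero_iff_le, not_le]; exact hs)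
  refine ⟨n, k, s, ⟨?_, ?_⟩, ?_⟩
  · -- x ∈ ball s (eps n - eps k)
    show edist x s < _; rw [edist_comm]
    rw [lt_tsub_iff_right] at hk ⊢
    rw [add_comm] at hk
    rwa [edist_comm s x]
  · -- exclusion condition
    refine lt_of_lt_of_le ?_ (le_infEdist.2 fun t ht => hmin t ht)
    exact ENNReal.sub_lt_self (eps_ne_top n) (eps_ne_zero n)
      (by simp [ENNReal.div_eq_zero_iff, eps_ne_zero k])
  · -- subset of ball x δ
    intro y hy
    have hy1 : edist y s < eps n := hy.1.trans_le (tsub_le_self)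
    have : edist y x ≤ edist y s + edist s x := edist_triangle _ _ _
    have h2 : edist y x < eps n + eps n := by
      refine this.trans_lt (ENNReal.add_lt_add hy1 ?_)
      rwa [edist_comm]
    show edist y x < δ
    calc edist y x < eps n + eps n := h2
      _ < δ / 2 + δ / 2 := ENNReal.add_lt_add hn hn
      _ = δ := ENNReal.add_halves δ

end

theorem stmt11 {Y : Type*} [MetricSpace Y] [MeasurableSpace Y] [BorelSpace Y]
    (hY : ¬ TopologicalSpace.SeparableSpace Y) :
    ∃ D : ℕ → ℕ → Set (Set Y),
      -- the sets `D n k` decompose `Y`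
      (⋃ n, ⋃ k, ⋃₀ D n k) = Set.univ ∧
      -- each family `D n k` consists of pairwise disjoint Borel sets
      (∀ n k, (D n k).PairwiseDisjoint id) ∧
      (∀ n k, ∀ S ∈ D n k, MeasurableSet S) ∧
      -- (i) any subfamily has Borel union
      (∀ n k, ∀ 𝒮 ⊆ D n k, MeasurableSet (⋃₀ 𝒮)) ∧
      -- (ii) every nonempty open set is the union of the members contained in it
      (∀ G : Set Y, IsOpen G → G.Nonempty →
        G = ⋃₀ {S | (∃ n k, S ∈ D n k) ∧ S ⊆ G}) := by
  refine ⟨fun n k => Set.range (Uset n k), ?_, ?_, ?_, ?_, ?_⟩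
  · ext x
    simp only [Set.mem_iUnion, Set.mem_sUnion, Set.mem_univ, iff_true]
    obtain ⟨n, k, s, hx, -⟩ := Uset_cover x (δ := ⊤) (by simp)
    exact ⟨n, k, Uset n k s, Set.mem_range_self s, hx⟩
  · intro n k S hS T hT hST
    obtain ⟨s, rfl⟩ := hS
    obtain ⟨t, rfl⟩ := hT
    have hst : s ≠ t := fun h => hST (by rw [h])
    exact Uset_disjoint n k hst
  · rintro n k S ⟨s, rfl⟩
    exact (Uset_isOpen n k s).measurableSet
  · intro n k 𝒮 h𝒮
    refine (isOpen_sUnion fun S hS => ?_).measurableSet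
    obtain ⟨s, rfl⟩ := h𝒮 hS
    exact Uset_isOpen n k s
  · intro G hG hGne
    apply Set.Subset.antisymm
    · intro x hx
      obtain ⟨δ, hδpos, hδ⟩ := EMetric.mem_nhds_iff.1 (hG.mem_nhds hx)
      obtain ⟨n, k, s, hxU, hUb⟩ := Uset_cover x (δ := δ) hδpos.ne'
      exact ⟨Uset n k s, ⟨⟨n, k, Set.mem_range_self s⟩, hUb.trans hδ⟩, hxU⟩
    · exact Set.sUnion_subset fun S hS => hS.2
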